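/- Let G be a finite simple connected graph on vertex set V with |V| = n ≥ 2. Then 1/(n−1) ≤ ρ(G) ≤ 1. -/

import Mathlib

open Finset

variable {V : Type*} [Fintype V] [DecidableEq V]

/-- The directed representatives of the cut `E(S, S̄)`: ordered pairs `(u, v)` with
`u ∈ S`, `v ∉ S` and `{u,v}` an edge of `G`.  Each edge of the cut corresponds to
exactly one such pair. -/
def cutPairs (G : SimpleGraph V) [DecidableRel G.Adj] (S : Finset V) : Finset (V × V) :=
  Finset.univ.filter fun p => p.1 ∈ S ∧ p.2 ∉ S ∧ G.Adj p.1 p.2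

/-- The volume of a set of vertices: the sum of the degrees of its elements. -/
def vol (G : SimpleGraph V) [DecidableRel G.Adj] (S : Finset V) : ℕ :=
  ∑ u ∈ S, G.degree u

/-- The conductance `Φ(G) = min_{∅ ≠ S ⊊ V} |E(S,S̄)| / min(vol S, vol S̄)`. -/
noncomputable def conductance (G : SimpleGraph V) [DecidableRel G.Adj] : ℝ :=
  ⨅ S : {S : Finset V // S.Nonempty ∧ S ≠ Finset.univ},
    ((cutPairs G S.1).card : ℝ) / min (vol G S.1 : ℝ) (vol G (S.1)ᶜ : ℝ)

/-- The average degree `d̄(S) = vol(S)/|S|`. -/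
noncomputable def avgDeg (G : SimpleGraph V) [DecidableRel G.Adj] (S : Finset V) : ℝ :=
  (vol G S : ℝ) / (S.card : ℝ)

/-- The diligence of the cut `E(S,S̄)`:
`ρ(S) = min_{{u,v} ∈ E(S,S̄)} max(d̄(S)/d_u, d̄(S)/d_v)`. -/
noncomputable def cutDiligence (G : SimpleGraph V) [DecidableRel G.Adj] (S : Finset V) : ℝ :=
  ⨅ p : cutPairs G S,
    max (avgDeg G S / (G.degree (p : V × V).1 : ℝ)) (avgDeg G S / (G.degree (p : V × V).2 : ℝ))

/-- The diligence of `G`: `ρ(G) = min_{S, 0 < vol S ≤ vol G / 2} ρ(S)`. -/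
noncomputable def diligence (G : SimpleGraph V) [DecidableRel G.Adj] : ℝ :=
  ⨅ S : {S : Finset V // 0 < vol G S ∧ 2 * vol G S ≤ vol G Finset.univ},
    cutDiligence G S.1

/-- The absolute diligence of `G`: `ρ̄(G) = min_{{u,v} ∈ E} max(1/d_u, 1/d_v)`. -/
noncomputable def absDiligence (G : SimpleGraph V) [DecidableRel G.Adj] : ℝ :=
  ⨅ p : {p : V × V // G.Adj p.1 p.2},
    max (1 / (G.degree (p : V × V).1 : ℝ)) (1 / (G.degree (p : V × V).2 : ℝ))

/-- For a finite simple connected graph `G` on `n ≥ 2` vertices,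
`1/(n−1) ≤ ρ(G) ≤ 1`. -/
theorem stmt4 {V : Type*} [Fintype V] [DecidableEq V]
    (G : SimpleGraph V) [DecidableRel G.Adj]
    (hn : 2 ≤ Fintype.card V) (hconn : G.Connected) :
    1 / ((Fintype.card V : ℝ) - 1) ≤ diligence G ∧ diligence G ≤ 1 := by
  have hdeg : ∀ v : V, 0 < G.degree v := by
    intro v
    obtain ⟨w, hw⟩ := Fintype.exists_ne_of_one_lt_card hn v
    obtain ⟨p⟩ := hconn v w
    obtain ⟨d, _, hd1, hd2⟩ := p.exists_boundary_dart ({v} : Set V) rfl (by simpa using hw)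
    rw [SimpleGraph.degree_pos_iff_exists_adj]
    exact ⟨d.snd, hd1 ▸ d.adj⟩
  have hcard : (1 : ℝ) ≤ (Fintype.card V : ℝ) - 1 := by
    have : (2 : ℝ) ≤ (Fintype.card V : ℝ) := by exact_mod_cast hn
    linarith
  -- key: for any admissible S, 1/(n-1) ≤ cutDiligence G S
  have key : ∀ S : Finset V, 0 < vol G S → 2 * vol G S ≤ vol G Finset.univ →
      1 / ((Fintype.card V : ℝ) - 1) ≤ cutDiligence G S := by
    intro S hS1 hS2
    have hSne : S.Nonempty := by
      rcases S.eq_empty_or_nonempty with rfl | h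
      · simp [vol] at hS1
      · exact h
    have hvolc : 0 < vol G Sᶜ := by
      have hsplit : vol G S + vol G Sᶜ = vol G Finset.univ := by
        simpa [vol] using Finset.sum_add_sum_compl S (fun v => G.degree v)
      omega
    have hScne : Sᶜ.Nonempty := by
      rcases Sᶜ.eq_empty_or_nonempty with h | h
      · rw [h] at hvolc; simp [vol] at hvolc
      · exact h
    obtain ⟨u, hu⟩ := hSne
    obtain ⟨v, hv⟩ := hScne
    rw [Finset.mem_compl] at hv
    obtain ⟨p⟩ := hconn u v
    obtain ⟨d, _, hdS, hdSc⟩ := p.exists_boundary_dart (↑S) hu hv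
    have hmem : (d.fst, d.snd) ∈ cutPairs G S := by
      simp only [cutPairs, Finset.mem_filter, Finset.mem_univ, true_and]
      exact ⟨by exact_mod_cast hdS, by exact_mod_cast hdSc, d.adj⟩
    have hne : Nonempty (cutPairs G S : Finset (V × V)) := ⟨⟨_, hmem⟩⟩
    have havg : (1 : ℝ) ≤ avgDeg G S := by
      have h1 : (S.card : ℕ) ≤ vol G S :=
        (by simpa [vol] using Finset.card_nsmul_le_sum S (fun v => G.degree v) 1 (fun v _ => hdeg v))
      have hc : (0 : ℝ) < (S.card : ℝ) := by exact_mod_cast (Finset.card_pos.2 ⟨u, hu⟩)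
      rw [avgDeg, le_div_iff₀ hc, one_mul]
      exact_mod_cast h1
    refine le_ciInf fun q => ?_
    have hd1 : (0 : ℝ) < (G.degree (q : V × V).1 : ℝ) := by exact_mod_cast hdeg _
    have hd2 : (G.degree (q : V × V).1 : ℝ) ≤ (Fintype.card V : ℝ) - 1 := by
      have h := G.degree_lt_card_verts (q : V × V).1
      have h' : (G.degree (q : V × V).1 : ℝ) + 1 ≤ (Fintype.card V : ℝ) := by exact_mod_cast h
      linarith
    refine le_trans ?_ (le_max_left _ _)
    exact div_le_div₀ (le_trans zero_le_one havg) havg hd1 hd2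
  -- the distinguished set {u₀} for a minimum-degree vertex
  obtain ⟨u₀, _, hmin⟩ := Finset.exists_min_image Finset.univ (fun v => G.degree v) ⟨(Fintype.card_pos_iff.mp (by omega)).some, Finset.mem_univ _⟩
  have hmin' : ∀ v : V, G.degree u₀ ≤ G.degree v := fun v => hmin v (Finset.mem_univ v)
  have hS0 : 0 < vol G ({u₀} : Finset V) ∧ 2 * vol G ({u₀} : Finset V) ≤ vol G Finset.univ := by
    constructor
    · simpa [vol] using hdeg u₀
    · obtain ⟨w, hw⟩ := Fintype.exists_ne_of_one_lt_card hn u₀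
      have h1 : vol G Finset.univ = G.degree u₀ + ∑ v ∈ Finset.univ.erase u₀, G.degree v := by
        rw [vol, ← Finset.add_sum_erase _ _ (Finset.mem_univ u₀)]
      have h2 : G.degree w ≤ ∑ v ∈ Finset.univ.erase u₀, G.degree v :=
        Finset.single_le_sum (f := fun v => G.degree v) (fun i _ => Nat.zero_le _) (Finset.mem_erase.2 ⟨hw, Finset.mem_univ w⟩)
      have := hmin' w
      simp only [vol] at h1 ⊢
      simp only [Finset.sum_singleton]
      omega
  haveI : Nonempty {S : Finset V // 0 < vol G S ∧ 2 * vol G S ≤ vol G Finset.univ} :=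
    ⟨⟨{u₀}, hS0⟩⟩
  constructor
  · exact le_ciInf fun S => key S.1 S.2.1 S.2.2
  · -- upper bound
    have hbdd : BddBelow (Set.range fun S : {S : Finset V // 0 < vol G S ∧ 2 * vol G S ≤ vol G Finset.univ} => cutDiligence G S.1) := by
      refine ⟨1 / ((Fintype.card V : ℝ) - 1), ?_⟩
      rintro x ⟨S, rfl⟩
      exact key S.1 S.2.1 S.2.2
    refine le_trans (ciInf_le hbdd ⟨{u₀}, hS0⟩) ?_
    -- cutDiligence G {u₀} ≤ 1
    obtain ⟨w, hw⟩ := SimpleGraph.degree_pos_iff_exists_adj .. |>.1 (hdeg u₀)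
    have hmem : (u₀, w) ∈ cutPairs G ({u₀} : Finset V) := by
      simp only [cutPairs, Finset.mem_filter, Finset.mem_univ, true_and, Finset.mem_singleton]
      exact ⟨(G.ne_of_adj hw).symm, hw⟩
    have hbdd2 : BddBelow (Set.range fun p : (cutPairs G ({u₀} : Finset V) : Finset (V × V)) =>
        max (avgDeg G {u₀} / (G.degree (p : V × V).1 : ℝ)) (avgDeg G {u₀} / (G.degree (p : V × V).2 : ℝ))) := by
      refine ⟨0, ?_⟩
      rintro x ⟨p, rfl⟩
      refine le_trans ?_ (le_max_left _ _)
      exact div_nonneg (div_nonneg (Nat.cast_nonneg _) (Nat.cast_nonneg _)) (Nat.cast_nonneg _)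
    refine le_trans (ciInf_le hbdd2 ⟨(u₀, w), hmem⟩) ?_
    have havg : avgDeg G ({u₀} : Finset V) = (G.degree u₀ : ℝ) := by
      simp [avgDeg, vol]
    rw [havg]
    have hd0 : (0 : ℝ) < (G.degree u₀ : ℝ) := by exact_mod_cast hdeg u₀
    have hdw : (0 : ℝ) < (G.degree w : ℝ) := by exact_mod_cast hdeg w
    refine max_le ?_ ?_
    · simp [div_self hd0.ne']
    · rw [div_le_one hdw]
      exact_mod_cast hmin' w
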